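/- Assume the non-degeneracy condition with recoverable hidden states H* = {j*} × S*. Write G_i(x) = P(X_i | X_{−i} = x_{−i}). Then there exists a matrix Θ^{(1)} ∈ ℝ^{|H|×|X|} such that for all x with P(X_{1:T} = x) > 0, all positions i, and all s ∈ S*: (Θ^{(1)} G_i(x))_{(j*,s)} = P(H_i = (j*,s) | X_{−i} = x_{−i}) and ‖Θ^{(1)} G_i(x)‖₁ = 1. Moreover, for each s ∈ S* there exists Θ^{(2,s)} ∈ ℝ^{|𝕄|×|X|} such that for all such x and i: Θ^{(2,s)} G_i(x) = P(M_{j*}, H_i = (j*,s) | X_{−i} = x_{−i}), the vector with entries P(M_{j*} = m, H_i = (j*,s) | X_{−i} = x_{−i}). -/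

import Mathlib

open scoped Classical

noncomputable section

/-- Forward pass for a Markov chain with transition matrix `A`. -/
def fwdVec {H : Type*} [Fintype H] (A : Matrix H H ℝ) :
    (H → ℝ) → List (H → ℝ) → (H → ℝ)
  | μ, [] => μ
  | μ, v :: vs => fwdVec A (A.mulVec fun h => μ h * v h) vs

/-- `mJointAt A μ W m x i g = P(H_i = g, X_{−i} = x_{−i} | M = m)` in a
memory-augmented HMM (hidden chain `H_1, …, H_T`, `P(H_1) = A μ`). -/
def mJointAt {𝕄 S X : Type*} {N T : ℕ} [Fintype S] [DecidableEq S]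
    (A : Matrix (Fin N × S) (Fin N × S) ℝ) (μ : Fin N × S → ℝ)
    (W : X → 𝕄 → Fin N × S → ℝ) (m : Fin N → 𝕄)
    (x : Fin T → X) (i : Fin T) (g : Fin N × S) : ℝ :=
  ∑ h, fwdVec A (A.mulVec μ)
    (List.ofFn fun k : Fin T =>
      if k = i then (fun g' => if g' = g then 1 else 0)
      else fun g' => W (x k) (m g'.1) g') h

/-- `mZ … x i = P(X_{−i} = x_{−i})`. -/
def mZ {𝕄 S X : Type*} {N T : ℕ} [Fintype 𝕄] [Fintype S] [DecidableEq S]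
    (pM : (Fin N → 𝕄) → ℝ) (A : Matrix (Fin N × S) (Fin N × S) ℝ)
    (μ : Fin N × S → ℝ) (W : X → 𝕄 → Fin N × S → ℝ)
    (x : Fin T → X) (i : Fin T) : ℝ :=
  ∑ m, pM m * ∑ g, mJointAt A μ W m x i g

/-- `mSeqPm … m x = P(X_{1:T} = x | M = m)`. -/
def mSeqPm {𝕄 S X : Type*} {N T : ℕ} [Fintype S]
    (A : Matrix (Fin N × S) (Fin N × S) ℝ) (μ : Fin N × S → ℝ)
    (W : X → 𝕄 → Fin N × S → ℝ) (m : Fin N → 𝕄) (x : Fin T → X) : ℝ :=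
  ∑ h, fwdVec A (A.mulVec μ)
    (List.ofFn fun k : Fin T => fun g' => W (x k) (m g'.1) g') h

/-- `mSeqP … x = P(X_{1:T} = x)`. -/
def mSeqP {𝕄 S X : Type*} {N T : ℕ} [Fintype 𝕄] [Fintype S]
    (pM : (Fin N → 𝕄) → ℝ) (A : Matrix (Fin N × S) (Fin N × S) ℝ)
    (μ : Fin N × S → ℝ) (W : X → 𝕄 → Fin N × S → ℝ) (x : Fin T → X) : ℝ :=
  ∑ m, pM m * mSeqPm A μ W m x

/-- `mGtok … x i z = P(X_i = z | X_{−i} = x_{−i})`, the pretrained model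
output `G_i(x)` at position `i`. -/
def mGtok {𝕄 S X : Type*} {N T : ℕ} [Fintype 𝕄] [Fintype S] [DecidableEq S]
    (pM : (Fin N → 𝕄) → ℝ) (A : Matrix (Fin N × S) (Fin N × S) ℝ)
    (μ : Fin N × S → ℝ) (W : X → 𝕄 → Fin N × S → ℝ)
    (x : Fin T → X) (i : Fin T) (z : X) : ℝ :=
  (∑ m, pM m * ∑ g, mJointAt A μ W m x i g * W z (m g.1) g) / mZ pM A μ W x i

section AuxFwd
variable {H : Type*} [Fintype H] (A : Matrix H H ℝ)

lemma fwdVec_sum_mu {ι : Type*} (s : Finset ι) (μ : ι → H → ℝ) (l : List (H → ℝ)) (h : H) :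
    fwdVec A (fun h' => ∑ j ∈ s, μ j h') l h = ∑ j ∈ s, fwdVec A (μ j) l h := by
  induction l generalizing μ with
  | nil => simp [fwdVec]
  | cons v t ih =>
      show fwdVec A (A.mulVec fun h' => (∑ j ∈ s, μ j h') * v h') t h = _
      have h1 : (A.mulVec fun h' => (∑ j ∈ s, μ j h') * v h')
          = fun h' => ∑ j ∈ s, (A.mulVec fun h'' => μ j h'' * v h'') h' := by
        funext h'
        simp [Matrix.mulVec, dotProduct, Finset.sum_mul, Finset.mul_sum]
        rw [Finset.sum_comm]
      rw [h1, ih]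
      rfl

lemma fwdVec_set_sum {ι : Type*} (s : Finset ι) (μ : H → ℝ) (l : List (H → ℝ)) (n : ℕ)
    (hn : n < l.length) (w : ι → H → ℝ) (h : H) :
    ∑ j ∈ s, fwdVec A μ (l.set n (w j)) h
      = fwdVec A μ (l.set n (fun h' => ∑ j ∈ s, w j h')) h := by
  induction l generalizing n μ with
  | nil => simp at hn
  | cons v t ih =>
      cases n with
      | zero =>
          simp only [List.set]
          show ∑ j ∈ s, fwdVec A (A.mulVec fun h' => μ h' * w j h') t h
            = fwdVec A (A.mulVec fun h' => μ h' * ∑ j ∈ s, w j h') t h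
          have h1 : (A.mulVec fun h' => μ h' * ∑ j ∈ s, w j h')
              = fun h' => ∑ j ∈ s, (A.mulVec fun h'' => μ h'' * w j h'') h' := by
            funext h'
            simp [Matrix.mulVec, dotProduct, Finset.mul_sum]
            rw [Finset.sum_comm]
          rw [h1, fwdVec_sum_mu]
      | succ n =>
          simp only [List.set]
          show ∑ j ∈ s, fwdVec A (A.mulVec fun h' => μ h' * v h') (t.set n (w j)) h = _
          exact ih _ _ (by simpa using hn)

lemma fwdVec_nonneg (hA0 : ∀ g g', 0 ≤ A g' g) (μ : H → ℝ) (hμ : ∀ h', 0 ≤ μ h')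
    (l : List (H → ℝ)) (hl : ∀ v ∈ l, ∀ h', 0 ≤ v h') (h : H) :
    0 ≤ fwdVec A μ l h := by
  induction l generalizing μ with
  | nil => exact hμ h
  | cons v t ih =>
      refine ih _ (fun h' => ?_) (fun v' hv' => hl v' (List.mem_cons_of_mem _ hv'))
      exact Finset.sum_nonneg fun g _ =>
        mul_nonneg (hA0 g h') (mul_nonneg (hμ g) (hl v List.mem_cons_self g))

lemma fwdVec_mono (hA0 : ∀ g g', 0 ≤ A g' g) (μ μ' : H → ℝ)
    (hμ0 : ∀ h', 0 ≤ μ h') (hμ : ∀ h', μ h' ≤ μ' h')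
    (l l' : List (H → ℝ))
    (hl : List.Forall₂ (fun v v' => (∀ h', 0 ≤ v h') ∧ (∀ h', v h' ≤ v' h')) l l') (h : H) :
    fwdVec A μ l h ≤ fwdVec A μ' l' h := by
  induction hl generalizing μ μ' with
  | nil => exact hμ h
  | @cons v v' t t' hv ht ih =>
      refine ih _ _ (fun h' => ?_) (fun h' => ?_)
      · exact Finset.sum_nonneg fun g _ =>
          mul_nonneg (hA0 g h') (mul_nonneg (hμ0 g) (hv.1 g))
      · refine Finset.sum_le_sum fun g _ => ?_
        refine mul_le_mul_of_nonneg_left ?_ (hA0 g h')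
        calc μ g * v g ≤ μ' g * v g := mul_le_mul_of_nonneg_right (hμ g) (hv.1 g)
          _ ≤ μ' g * v' g :=
            mul_le_mul_of_nonneg_left (hv.2 g) (le_trans (hμ0 g) (hμ g))

end AuxFwd

lemma ofFn_ite_eq_set {T : ℕ} {α : Type*} (i : Fin T) (u : α) (f : Fin T → α) :
    (List.ofFn fun k => if k = i then u else f k) = (List.ofFn f).set i u := by
  apply List.ext_getElem
  · simp
  · intro n h1 h2
    simp only [List.getElem_ofFn, List.getElem_set]
    by_cases hn : (i : ℕ) = n
    · have : (⟨n, by simpa using h1⟩ : Fin T) = i := by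
        apply Fin.ext; simp [hn]
      simp [this, hn]
    · have : (⟨n, by simpa using h1⟩ : Fin T) ≠ i := by
        intro hc; exact hn (by simpa using congrArg Fin.val hc.symm)
      simp [this, hn]

lemma lin_eval {X : Type*} [Fintype X] (φ : (X → ℝ) →ₗ[ℝ] ℝ) (f : X → ℝ) :
    ∑ z, φ (fun z' => if z' = z then 1 else 0) * f z = φ f := by
  have hf : f = ∑ z, f z • (fun z' => if z' = z then (1 : ℝ) else 0) := by
    funext z'
    simp [Finset.sum_apply, Finset.sum_ite_eq]
  conv_rhs => rw [hf]
  rw [map_sum]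
  refine Finset.sum_congr rfl fun z _ => ?_
  rw [map_smul, smul_eq_mul, mul_comm]

lemma exists_dual {X : Type*} [Fintype X] {ι : Type*} (u : ι → X → ℝ)
    (V2 : Submodule ℝ (X → ℝ)) (hli : LinearIndependent ℝ u)
    (hdisj : Submodule.span ℝ (Set.range u) ⊓ V2 = ⊥) :
    ∃ Φ : ι → ((X → ℝ) →ₗ[ℝ] ℝ),
      (∀ p q, Φ p (u q) = if q = p then 1 else 0) ∧ ∀ p f, f ∈ V2 → Φ p f = 0 := by
  have hli2 : LinearIndependent ℝ (V2.mkQ ∘ u) :=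
    hli.map (by rw [Submodule.ker_mkQ]; exact disjoint_iff.mpr hdisj)
  obtain ⟨Q, hQ⟩ := Submodule.exists_isCompl (Submodule.span ℝ (Set.range (V2.mkQ ∘ u)))
  refine ⟨fun p => Finsupp.lapply p ∘ₗ (hli2.repr : _ →ₗ[ℝ] _) ∘ₗ
      (Submodule.linearProjOfIsCompl _ Q hQ) ∘ₗ V2.mkQ, ?_, ?_⟩
  · intro p q
    have hmem : V2.mkQ (u q) ∈ Submodule.span ℝ (Set.range (V2.mkQ ∘ u)) :=
      Submodule.subset_span ⟨q, rfl⟩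
    have hproj : Submodule.linearProjOfIsCompl _ Q hQ (V2.mkQ (u q)) = ⟨V2.mkQ (u q), hmem⟩ :=
      Submodule.linearProjOfIsCompl_apply_left hQ ⟨_, hmem⟩
    simp only [LinearMap.comp_apply, hproj, hli2.repr_eq_single q ⟨_, hmem⟩ rfl]
    simp [Finsupp.single_apply]
  · intro p f hf
    have h0 : V2.mkQ f = 0 := (Submodule.Quotient.mk_eq_zero V2).mpr hf
    simp [LinearMap.comp_apply, h0]

/-!
STATEMENT 7 (Claim D.2 of the paper).

Memory-augmented HMM with non-degeneracy for recoverable states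
`H* = {j*} × S*`: the columns `{W_{:,(m,h)}}_{m ∈ 𝕄, h ∈ H*}` are linearly
independent and their span intersects the span of the remaining columns
`{W_{:,(m,h)}}_{m ∈ 𝕄, h ∉ H*}` trivially.  Then there exists
`Θ¹ ∈ ℝ^{|H|×|X|}` such that for all `x` with `P(X_{1:T} = x) > 0`, all
positions `i`, and all `s ∈ S*`:
`(Θ¹ G_i(x))_{(j*,s)} = P(H_i = (j*,s) | X_{−i} = x_{−i})` and
`‖Θ¹ G_i(x)‖₁ = 1`.  Moreover for each `s ∈ S*` there exists
`Θ^{(2,s)} ∈ ℝ^{|𝕄|×|X|}` such that for all such `x`, `i`: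
`Θ^{(2,s)} G_i(x) = P(M_{j*}, H_i = (j*,s) | X_{−i} = x_{−i})`.
-/
theorem stmt7 {𝕄 S X : Type*} {N : ℕ}
    [Fintype 𝕄] [Fintype S] [Fintype X] [DecidableEq 𝕄] [DecidableEq S]
    (pM : (Fin N → 𝕄) → ℝ) (μ : Fin N × S → ℝ)
    (A : Matrix (Fin N × S) (Fin N × S) ℝ) (W : X → 𝕄 → Fin N × S → ℝ)
    (hpM0 : ∀ m, 0 ≤ pM m) (hpM1 : ∑ m, pM m = 1)
    (hμ0 : ∀ g, 0 ≤ μ g) (hμ1 : ∑ g, μ g = 1)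
    (hA0 : ∀ g g', 0 ≤ A g' g) (hA1 : ∀ g, ∑ g', A g' g = 1)
    (hW0 : ∀ z m0 g, 0 ≤ W z m0 g) (hW1 : ∀ m0 g, ∑ z, W z m0 g = 1)
    -- non-degeneracy with recoverable hidden states `H* = {j*} × S*`
    (jstar : Fin N) (Sstar : Finset S)
    (hli : LinearIndependent ℝ
      (fun p : 𝕄 × {s : S // s ∈ Sstar} => fun z : X => W z p.1 (jstar, p.2.1)))
    (hspan : Submodule.span ℝ
        {f : X → ℝ | ∃ m0 : 𝕄, ∃ s : S, s ∈ Sstar ∧ f = fun z => W z m0 (jstar, s)}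
      ⊓ Submodule.span ℝ
        {f : X → ℝ | ∃ m0 : 𝕄, ∃ g : Fin N × S,
          ¬(g.1 = jstar ∧ g.2 ∈ Sstar) ∧ f = fun z => W z m0 g}
      = ⊥)
    (T : ℕ) :
    (∃ Θ1 : Matrix (Fin N × S) X ℝ,
      ∀ x : Fin T → X, 0 < mSeqP pM A μ W x → ∀ i : Fin T, ∀ s ∈ Sstar,
        (Θ1.mulVec (mGtok pM A μ W x i)) (jstar, s)
            = (∑ m, pM m * mJointAt A μ W m x i (jstar, s)) / mZ pM A μ W x i
        ∧ ∑ g, |(Θ1.mulVec (mGtok pM A μ W x i)) g| = 1)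
    ∧ ∀ s ∈ Sstar, ∃ Θ2 : Matrix 𝕄 X ℝ,
        ∀ x : Fin T → X, 0 < mSeqP pM A μ W x → ∀ i : Fin T, ∀ m0 : 𝕄,
          (Θ2.mulVec (mGtok pM A μ W x i)) m0
            = (∑ m, if m jstar = m0 then pM m * mJointAt A μ W m x i (jstar, s) else 0)
                / mZ pM A μ W x i := by
  classical
  by_cases hne : Nonempty (Fin N × S)
  case neg =>
    have hE : IsEmpty (Fin N × S) := not_nonempty_iff.mp hne
    have hzero : ∀ x : Fin T → X, mSeqP pM A μ W x = 0 := by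
      intro x; simp [mSeqP, mSeqPm]
    refine ⟨⟨0, fun x hx => absurd hx (by rw [hzero x]; exact lt_irrefl 0)⟩,
      fun s hs => ⟨0, fun x hx => absurd hx (by rw [hzero x]; exact lt_irrefl 0)⟩⟩
  case pos =>
  -- set up dual functionals
  set u : 𝕄 × {s : S // s ∈ Sstar} → X → ℝ :=
    fun p => fun z : X => W z p.1 (jstar, p.2.1) with hu
  have hrange : Set.range u
      = {f : X → ℝ | ∃ m0 : 𝕄, ∃ s : S, s ∈ Sstar ∧ f = fun z => W z m0 (jstar, s)} := by
    ext f
    constructor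
    · rintro ⟨⟨m0, s, hs⟩, rfl⟩
      exact ⟨m0, s, hs, rfl⟩
    · rintro ⟨m0, s, hs, rfl⟩
      exact ⟨(m0, ⟨s, hs⟩), rfl⟩
  obtain ⟨Φ, hΦu, hΦV⟩ := exists_dual u
    (Submodule.span ℝ
      {f : X → ℝ | ∃ m0 : 𝕄, ∃ g : Fin N × S,
        ¬(g.1 = jstar ∧ g.2 ∈ Sstar) ∧ f = fun z => W z m0 g})
    hli (by rw [hrange]; exact hspan)
  have fact1 : ∀ p (m0 : 𝕄) (g : Fin N × S), ¬(g.1 = jstar ∧ g.2 ∈ Sstar) →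
      Φ p (fun z => W z m0 g) = 0 :=
    fun p m0 g hg => hΦV p _ (Submodule.subset_span ⟨m0, g, hg, rfl⟩)
  -- nonnegativity of joints
  have hJ0 : ∀ (m : Fin N → 𝕄) (x : Fin T → X) (i : Fin T) (g : Fin N × S),
      0 ≤ mJointAt A μ W m x i g := by
    intro m x i g
    refine Finset.sum_nonneg fun h _ => fwdVec_nonneg A hA0 _ ?_ _ ?_ h
    · intro h'
      exact Finset.sum_nonneg fun g' _ => mul_nonneg (hA0 g' h') (hμ0 g')
    · intro v hv h'
      rw [List.mem_ofFn] at hv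
      obtain ⟨k, rfl⟩ := hv
      split_ifs with hk
      · dsimp only; split_ifs <;> norm_num
      · exact hW0 _ _ _
  have hWle1 : ∀ (z : X) (m0 : 𝕄) (g : Fin N × S), W z m0 g ≤ 1 := by
    intro z m0 g
    rw [← hW1 m0 g]
    exact Finset.single_le_sum (f := fun z => W z m0 g) (fun z' _ => hW0 z' m0 g)
      (Finset.mem_univ z)
  -- P(X_{-i}) ≥ P(X)
  have hle : ∀ (m : Fin N → 𝕄) (x : Fin T → X) (i : Fin T),
      mSeqPm A μ W m x ≤ ∑ g, mJointAt A μ W m x i g := by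
    intro m x i
    have hnu : ∀ h', 0 ≤ A.mulVec μ h' := fun h' =>
      Finset.sum_nonneg fun g' _ => mul_nonneg (hA0 g' h') (hμ0 g')
    have hJset : ∀ g : Fin N × S, mJointAt A μ W m x i g
        = ∑ h, fwdVec A (A.mulVec μ)
            ((List.ofFn fun k : Fin T => fun g' => W (x k) (m g'.1) g').set i
              (fun g' => if g' = g then 1 else 0)) h := by
      intro g
      simp only [mJointAt, ofFn_ite_eq_set]
    have hsum : ∑ g, mJointAt A μ W m x i g
        = ∑ h, fwdVec A (A.mulVec μ)
            ((List.ofFn fun k : Fin T => fun g' => W (x k) (m g'.1) g').set i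
              (fun _ => (1 : ℝ))) h := by
      rw [Finset.sum_congr rfl fun g _ => hJset g, Finset.sum_comm]
      refine Finset.sum_congr rfl fun h _ => ?_
      rw [fwdVec_set_sum A Finset.univ _ _ _ (by simp [i.isLt]) _ h]
      congr 2
      funext g'
      simp [Finset.sum_ite_eq]
    rw [hsum, mSeqPm]
    refine Finset.sum_le_sum fun h _ => ?_
    refine fwdVec_mono A hA0 _ _ hnu (fun h' => le_refl _) _ _ ?_ h
    rw [List.forall₂_iff_get]
    refine ⟨by simp, fun n h1 h2 => ?_⟩
    simp only [List.get_eq_getElem, List.getElem_ofFn, List.getElem_set]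
    constructor
    · intro h'
      exact hW0 _ _ _
    · intro h'
      split_ifs with hni
      · exact hWle1 _ _ _
      · exact le_refl _
  -- positivity of the denominator
  have hZpos : ∀ (x : Fin T → X), 0 < mSeqP pM A μ W x → ∀ i : Fin T,
      0 < mZ pM A μ W x i := by
    intro x hx i
    refine lt_of_lt_of_le hx ?_
    refine Finset.sum_le_sum fun m _ => ?_
    exact mul_le_mul_of_nonneg_left (hle m x i) (hpM0 m)
  -- total mass of mGtok
  have hGsum : ∀ (x : Fin T → X) (i : Fin T), 0 < mZ pM A μ W x i →
      ∑ z, mGtok pM A μ W x i z = 1 := by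
    intro x i hZ
    simp only [mGtok]
    rw [← Finset.sum_div]
    have hnum : ∑ z, ∑ m, pM m * ∑ g, mJointAt A μ W m x i g * W z (m g.1) g
        = mZ pM A μ W x i := by
      rw [Finset.sum_comm, mZ]
      refine Finset.sum_congr rfl fun m _ => ?_
      rw [← Finset.mul_sum]
      congr 1
      rw [Finset.sum_comm]
      refine Finset.sum_congr rfl fun g _ => ?_
      rw [← Finset.mul_sum, hW1, mul_one]
    rw [hnum, div_self hZ.ne']
  -- the key identity
  have hkey : ∀ (x : Fin T → X) (i : Fin T), 0 < mZ pM A μ W x i →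
      ∀ p : 𝕄 × {s : S // s ∈ Sstar},
      Φ p (mGtok pM A μ W x i)
        = (∑ m, if m jstar = p.1 then pM m * mJointAt A μ W m x i (jstar, p.2.1) else 0)
            / mZ pM A μ W x i := by
    intro x i hZ p
    have hGdecomp : mGtok pM A μ W x i
        = ∑ m, ∑ g, ((pM m * mJointAt A μ W m x i g) / mZ pM A μ W x i) •
            (fun z => W z (m g.1) g) := by
      funext z
      simp only [mGtok, Finset.sum_apply, Pi.smul_apply, smul_eq_mul]
      rw [Finset.sum_div]
      refine Finset.sum_congr rfl fun m _ => ?_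
      rw [Finset.mul_sum, Finset.sum_div]
      refine Finset.sum_congr rfl fun g _ => ?_
      ring
    rw [hGdecomp, map_sum]
    have hterm : ∀ (m : Fin N → 𝕄) (g : Fin N × S),
        ((pM m * mJointAt A μ W m x i g) / mZ pM A μ W x i) * Φ p (fun z => W z (m g.1) g)
          = if g = (jstar, p.2.1) ∧ m jstar = p.1
              then (pM m * mJointAt A μ W m x i g) / mZ pM A μ W x i else 0 := by
      intro m g
      by_cases hc : g = (jstar, p.2.1) ∧ m jstar = p.1
      · obtain ⟨hg, hm⟩ := hc
        have hwu : (fun z => W z (m g.1) g) = u p := by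
          subst hg
          funext z
          simp only [hu]
          rw [hm]
        rw [hwu, hΦu p p, if_pos rfl, mul_one, if_pos ⟨hg, hm⟩]
      · rw [if_neg hc]
        have hzero : Φ p (fun z => W z (m g.1) g) = 0 := by
          by_cases hEg : g.1 = jstar ∧ g.2 ∈ Sstar
          · obtain ⟨h1, h2⟩ := hEg
            have hg' : g = (jstar, g.2) := by rw [← h1]
            have hwu : (fun z => W z (m g.1) g) = u (m g.1, ⟨g.2, h2⟩) := by
              funext z
              show W z (m g.1) g = W z (m g.1) (jstar, g.2)
              rw [← hg']
            rw [hwu, hΦu]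
            rw [if_neg]
            intro hq
            have hfst : m g.1 = p.1 := congrArg Prod.fst hq
            have hsnd : g.2 = p.2.1 := Subtype.ext_iff.mp (congrArg Prod.snd hq)
            refine hc ⟨?_, ?_⟩
            · rw [hg', hsnd]
            · rw [← h1]; exact hfst
          · exact fact1 p _ g hEg
        rw [hzero, mul_zero]
    calc ∑ m, Φ p (∑ g, ((pM m * mJointAt A μ W m x i g) / mZ pM A μ W x i) •
            (fun z => W z (m g.1) g))
        = ∑ m, ∑ g, ((pM m * mJointAt A μ W m x i g) / mZ pM A μ W x i) *
            Φ p (fun z => W z (m g.1) g) := by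
          refine Finset.sum_congr rfl fun m _ => ?_
          rw [map_sum]
          exact Finset.sum_congr rfl fun g _ => by rw [map_smul, smul_eq_mul]
      _ = ∑ m, if m jstar = p.1
            then (pM m * mJointAt A μ W m x i (jstar, p.2.1)) / mZ pM A μ W x i else 0 := by
          refine Finset.sum_congr rfl fun m _ => ?_
          rw [Finset.sum_congr rfl fun g _ => hterm m g]
          by_cases hm : m jstar = p.1
          · simp [hm, Finset.sum_ite_eq']
          · simp [hm]
      _ = (∑ m, if m jstar = p.1 then pM m * mJointAt A μ W m x i (jstar, p.2.1) else 0)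
            / mZ pM A μ W x i := by
          rw [Finset.sum_div]
          refine Finset.sum_congr rfl fun m _ => ?_
          split_ifs <;> simp
  -- aggregated row functionals
  obtain ⟨ψf, hψf⟩ : ∃ ψf : S → ((X → ℝ) →ₗ[ℝ] ℝ),
      ∀ s' : S, ψf s' = ∑ m0 : 𝕄, if hs' : s' ∈ Sstar then Φ (m0, ⟨s', hs'⟩) else 0 :=
    ⟨_, fun _ => rfl⟩
  obtain ⟨rem, hrem⟩ : ∃ rem : (X → ℝ) →ₗ[ℝ] ℝ,
      rem = (∑ z : X, LinearMap.proj z) - ∑ s' ∈ Sstar, ψf s' := ⟨_, rfl⟩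
  -- ψf values
  have hψval : ∀ (x : Fin T → X) (i : Fin T), 0 < mZ pM A μ W x i → ∀ s' ∈ Sstar,
      ψf s' (mGtok pM A μ W x i)
        = (∑ m, pM m * mJointAt A μ W m x i (jstar, s')) / mZ pM A μ W x i := by
    intro x i hZ s' hs'
    rw [hψf, LinearMap.sum_apply]
    rw [Finset.sum_congr rfl fun m0 _ => by rw [dif_pos hs']]
    rw [Finset.sum_congr rfl fun m0 _ => hkey x i hZ (m0, ⟨s', hs'⟩)]
    rw [← Finset.sum_div]
    congr 1
    rw [Finset.sum_comm]
    refine Finset.sum_congr rfl fun m _ => ?_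
    simp [Finset.sum_ite_eq]
  have hψnn : ∀ (x : Fin T → X) (i : Fin T), 0 < mZ pM A μ W x i → ∀ s' ∈ Sstar,
      0 ≤ ψf s' (mGtok pM A μ W x i) := by
    intro x i hZ s' hs'
    rw [hψval x i hZ s' hs']
    exact div_nonneg (Finset.sum_nonneg fun m _ =>
      mul_nonneg (hpM0 m) (hJ0 m x i _)) hZ.le
  -- rem value
  have hremval : ∀ (x : Fin T → X), 0 < mSeqP pM A μ W x → ∀ i : Fin T,
      rem (mGtok pM A μ W x i) = 1 - ∑ s' ∈ Sstar, ψf s' (mGtok pM A μ W x i) := by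
    intro x hx i
    rw [hrem, LinearMap.sub_apply, LinearMap.sum_apply, LinearMap.sum_apply]
    congr 1
    simp only [LinearMap.proj_apply]
    exact hGsum x i (hZpos x hx i)
  have hsum_prod : ∀ (x : Fin T → X) (i : Fin T) (m : Fin N → 𝕄),
      ∑ s' ∈ Sstar, mJointAt A μ W m x i (jstar, s')
        = ∑ g ∈ ({jstar} : Finset (Fin N)) ×ˢ Sstar, mJointAt A μ W m x i g := by
    intro x i m
    rw [Finset.sum_product, Finset.sum_singleton]
  have hψsum : ∀ (x : Fin T → X), 0 < mSeqP pM A μ W x → ∀ i : Fin T,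
      ∑ s' ∈ Sstar, ψf s' (mGtok pM A μ W x i)
        = (∑ m, pM m * ∑ s' ∈ Sstar, mJointAt A μ W m x i (jstar, s'))
            / mZ pM A μ W x i := by
    intro x hx i
    have hZ := hZpos x hx i
    rw [Finset.sum_congr rfl fun s' hs' => hψval x i hZ s' hs', ← Finset.sum_div]
    congr 1
    rw [Finset.sum_comm]
    refine Finset.sum_congr rfl fun m _ => ?_
    rw [← Finset.mul_sum]
  have hremnn : ∀ (x : Fin T → X), 0 < mSeqP pM A μ W x → ∀ i : Fin T,
      0 ≤ rem (mGtok pM A μ W x i) := by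
    intro x hx i
    have hZ := hZpos x hx i
    rw [hremval x hx i, sub_nonneg, hψsum x hx i, div_le_one hZ]
    refine Finset.sum_le_sum fun m _ => ?_
    refine mul_le_mul_of_nonneg_left ?_ (hpM0 m)
    rw [hsum_prod x i m]
    exact Finset.sum_le_sum_of_subset_of_nonneg (Finset.subset_univ _)
      (fun g _ _ => hJ0 m x i g)
  have hremzero : (∀ g : Fin N × S, g.1 = jstar ∧ g.2 ∈ Sstar) →
      ∀ (x : Fin T → X), 0 < mSeqP pM A μ W x → ∀ i : Fin T,
      rem (mGtok pM A μ W x i) = 0 := by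
    intro hall x hx i
    have hZ := hZpos x hx i
    have huniv : (Finset.univ : Finset (Fin N × S))
        = ({jstar} : Finset (Fin N)) ×ˢ Sstar := by
      ext g
      simp only [Finset.mem_univ, true_iff, Finset.mem_product, Finset.mem_singleton]
      exact ⟨(hall g).1, (hall g).2⟩
    rw [hremval x hx i, hψsum x hx i]
    rw [sub_eq_zero]
    symm
    rw [div_eq_one_iff_eq hZ.ne']
    rw [mZ]
    refine Finset.sum_congr rfl fun m _ => ?_
    congr 1
    rw [hsum_prod x i m, ← huniv]
  -- designated leftover row
  obtain ⟨d, hdspec⟩ : ∃ d : Fin N × S,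
      (∃ g : Fin N × S, ¬(g.1 = jstar ∧ g.2 ∈ Sstar)) →
        ¬(d.1 = jstar ∧ d.2 ∈ Sstar) := by
    by_cases h : ∃ g : Fin N × S, ¬(g.1 = jstar ∧ g.2 ∈ Sstar)
    · obtain ⟨g, hg⟩ := h
      exact ⟨g, fun _ => hg⟩
    · exact ⟨Classical.arbitrary _, fun hc => absurd hc h⟩
  obtain ⟨R, hR⟩ : ∃ R : (Fin N × S) → ((X → ℝ) →ₗ[ℝ] ℝ),
      ∀ g, R g = (if g.1 = jstar ∧ g.2 ∈ Sstar then ψf g.2 else 0)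
        + (if g = d then rem else 0) := ⟨_, fun _ => rfl⟩
  constructor
  · -- Θ1
    refine ⟨fun g z => R g (fun z' => if z' = z then 1 else 0), ?_⟩
    intro x hx i s hs
    have hZ := hZpos x hx i
    have hmul : ∀ g : Fin N × S,
        (Matrix.mulVec (fun g z => R g (fun z' => if z' = z then 1 else 0))
          (mGtok pM A μ W x i)) g = R g (mGtok pM A μ W x i) := by
      intro g
      show ∑ z, R g (fun z' => if z' = z then 1 else 0) * mGtok pM A μ W x i z = _
      exact lin_eval _ _
    have hRval : ∀ g : Fin N × S, R g (mGtok pM A μ W x i)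
        = (if g.1 = jstar ∧ g.2 ∈ Sstar then ψf g.2 (mGtok pM A μ W x i) else 0)
          + (if g = d then rem (mGtok pM A μ W x i) else 0) := by
      intro g
      rw [hR, LinearMap.add_apply]
      congr 1
      · exact apply_ite (fun φ : (X → ℝ) →ₗ[ℝ] ℝ => φ (mGtok pM A μ W x i)) _ _ _
      · exact apply_ite (fun φ : (X → ℝ) →ₗ[ℝ] ℝ => φ (mGtok pM A μ W x i)) _ _ _
    constructor
    · rw [hmul, hRval]
      have h1 : ((jstar, s) : Fin N × S).1 = jstar ∧ ((jstar, s) : Fin N × S).2 ∈ Sstar :=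
        ⟨rfl, hs⟩
      rw [if_pos h1]
      by_cases hd2 : ((jstar, s) : Fin N × S) = d
      · have hall : ∀ g : Fin N × S, g.1 = jstar ∧ g.2 ∈ Sstar := by
          by_contra hc
          have hex : ∃ g : Fin N × S, ¬(g.1 = jstar ∧ g.2 ∈ Sstar) := not_forall.mp hc
          have := hdspec hex
          rw [← hd2] at this
          exact this h1
        rw [if_pos hd2, hremzero hall x hx i, add_zero, hψval x i hZ s hs]
      · rw [if_neg hd2, add_zero, hψval x i hZ s hs]
    · -- norm 1
      have habs : ∀ g : Fin N × S,
          |(Matrix.mulVec (fun g z => R g (fun z' => if z' = z then 1 else 0))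
            (mGtok pM A μ W x i)) g|
          = (if g.1 = jstar ∧ g.2 ∈ Sstar then ψf g.2 (mGtok pM A μ W x i) else 0)
            + (if g = d then rem (mGtok pM A μ W x i) else 0) := by
        intro g
        rw [hmul, hRval]
        refine abs_of_nonneg (add_nonneg ?_ ?_)
        · split_ifs with hEg
          · exact hψnn x i hZ g.2 hEg.2
          · exact le_refl 0
        · split_ifs
          · exact hremnn x hx i
          · exact le_refl 0
      rw [Finset.sum_congr rfl fun g _ => habs g, Finset.sum_add_distrib]
      have h2 : ∑ g : Fin N × S, (if g = d then rem (mGtok pM A μ W x i) else 0)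
          = rem (mGtok pM A μ W x i) := by
        simp [Finset.sum_ite_eq']
      have h3 : ∑ g : Fin N × S,
          (if g.1 = jstar ∧ g.2 ∈ Sstar then ψf g.2 (mGtok pM A μ W x i) else 0)
          = ∑ s' ∈ Sstar, ψf s' (mGtok pM A μ W x i) := by
        rw [Fintype.sum_prod_type]
        have hj : ∀ j : Fin N,
            (∑ s' : S, if (j = jstar ∧ s' ∈ Sstar) then ψf s' (mGtok pM A μ W x i) else 0)
            = if j = jstar then ∑ s' ∈ Sstar, ψf s' (mGtok pM A μ W x i) else 0 := by
          intro j
          by_cases hjj : j = jstar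
          · simp only [hjj, true_and, if_pos rfl]
            simp [Finset.sum_ite_mem]
          · simp [hjj]
        rw [Finset.sum_congr rfl fun j _ => hj j]
        simp [Finset.sum_ite_eq, Finset.sum_ite_eq']
      rw [h2, h3, hremval x hx i]
      ring
  · -- Θ2
    intro s hs
    refine ⟨fun m0 z => Φ (m0, ⟨s, hs⟩) (fun z' => if z' = z then 1 else 0), ?_⟩
    intro x hx i m0
    have hZ := hZpos x hx i
    have hmul : (Matrix.mulVec (fun m0 z => Φ (m0, ⟨s, hs⟩) (fun z' => if z' = z then 1 else 0))
        (mGtok pM A μ W x i)) m0 = Φ (m0, ⟨s, hs⟩) (mGtok pM A μ W x i) := by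
      show ∑ z, Φ (m0, ⟨s, hs⟩) (fun z' => if z' = z then 1 else 0) * mGtok pM A μ W x i z = _
      exact lin_eval _ _
    rw [hmul, hkey x i hZ (m0, ⟨s, hs⟩)]


end
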